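/- (Forbidden triples) Let C be a cap in (Z/2Z)^n with affinely independent subset B of size 8 and dependent set {x₁, x₂, x₃} with x_i = Σ B_i and |B_i| = 5 for each i. Then at most one of the three intersection numbers |B₁ ∩ B₂|, |B₁ ∩ B₃|, |B₂ ∩ B₃| equals 2. -/

import Mathlib

/-- A cap: a subset of (Z/2Z)^n containing no quad (four distinct vectors summing to zero). -/
def IsCap {n : ℕ} (C : Set (Fin n → ZMod 2)) : Prop :=
  ∀ a ∈ C, ∀ b ∈ C, ∀ c ∈ C, ∀ d ∈ C,
    a ≠ b → a ≠ c → a ≠ d → b ≠ c → b ≠ d → c ≠ d → a + b + c + d ≠ 0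

/-- Affine independence: no element is the sum of an odd number of other elements. -/
def AffIndep {n : ℕ} (B : Finset (Fin n → ZMod 2)) : Prop :=
  ∀ b ∈ B, ∀ T ⊆ B.erase b, Odd T.card → b ≠ ∑ v ∈ T, v

open Finset
open scoped symmDiff

lemma add_self_zero {n : ℕ} (x : Fin n → ZMod 2) : x + x = 0 := by
  funext i
  show x i + x i = 0
  rw [← two_mul]
  have : (2 : ZMod 2) = 0 := by decide
  rw [this, zero_mul]

lemma sum_symmDiff_char2 {n : ℕ} (A B : Finset (Fin n → ZMod 2)) :
    ∑ v ∈ A ∆ B, v = (∑ v ∈ A, v) + ∑ v ∈ B, v := by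
  have hA : ∑ v ∈ A \ B, v + ∑ v ∈ A ∩ B, v = ∑ v ∈ A, v := by
    rw [← Finset.sum_union (Finset.disjoint_sdiff_inter A B), Finset.sdiff_union_inter]
  have hB : ∑ v ∈ B \ A, v + ∑ v ∈ B ∩ A, v = ∑ v ∈ B, v := by
    rw [← Finset.sum_union (Finset.disjoint_sdiff_inter B A), Finset.sdiff_union_inter]
  have hd : A ∆ B = (A \ B) ∪ (B \ A) := by
    rw [symmDiff_def]; rfl
  rw [hd, Finset.sum_union disjoint_sdiff_sdiff, ← hA, ← hB, inter_comm B A]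
  abel_nf
  rw [two_smul, add_self_zero, add_zero]

lemma card_symmDiff' {α : Type*} [DecidableEq α] (A B : Finset α) :
    (A ∆ B).card + 2 * (A ∩ B).card = A.card + B.card := by
  have hd : A ∆ B = (A \ B) ∪ (B \ A) := by
    rw [symmDiff_def]; rfl
  have h1 := Finset.card_sdiff_add_card_inter A B
  have h2 := Finset.card_sdiff_add_card_inter B A
  rw [inter_comm B A] at h2
  rw [hd, Finset.card_union_of_disjoint disjoint_sdiff_sdiff]
  omega

lemma apex {n : ℕ} (C : Set (Fin n → ZMod 2)) (hC : IsCap C)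
    (B A₁ A₂ A₃ : Finset (Fin n → ZMod 2)) (hBC : ↑B ⊆ C)
    (hBcard : B.card = 8)
    (y₁ y₂ y₃ : Fin n → ZMod 2)
    (hy₁C : y₁ ∈ C) (hy₁B : y₁ ∉ B)
    (hy₂C : y₂ ∈ C) (hy₂B : y₂ ∉ B)
    (hy₃C : y₃ ∈ C) (hy₃B : y₃ ∉ B)
    (h12 : y₁ ≠ y₂) (h13 : y₁ ≠ y₃) (h23 : y₂ ≠ y₃)
    (hs₁ : A₁ ⊆ B) (hs₂ : A₂ ⊆ B) (hs₃ : A₃ ⊆ B)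
    (he₁ : y₁ = ∑ v ∈ A₁, v) (he₂ : y₂ = ∑ v ∈ A₂, v) (he₃ : y₃ = ∑ v ∈ A₃, v)
    (hc₁ : A₁.card = 5) (hc₂ : A₂.card = 5) (hc₃ : A₃.card = 5)
    (i12 : (A₁ ∩ A₂).card = 2) (i13 : (A₁ ∩ A₃).card = 2) : False := by
  -- p = |A₂ ∩ A₃|
  set p := (A₂ ∩ A₃).card with hp
  -- lower bound p ≥ 2 from |A₂ ∪ A₃| ≤ 8
  have hu23 : (A₂ ∪ A₃).card ≤ 8 := by
    rw [← hBcard]; exact Finset.card_le_card (Finset.union_subset hs₂ hs₃)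
  have hie23 := Finset.card_union_add_card_inter A₂ A₃
  have hp2 : 2 ≤ p := by omega
  have hp5 : p ≤ 5 := by
    rw [← hc₂]; exact Finset.card_le_card (Finset.inter_subset_left)
  -- p ≠ 5 : else A₂ = A₃
  have hp5' : p ≠ 5 := by
    intro h5
    have h1 : A₂ ∩ A₃ = A₂ :=
      Finset.eq_of_subset_of_card_le Finset.inter_subset_left (by omega)
    have h2 : A₂ ∩ A₃ = A₃ :=
      Finset.eq_of_subset_of_card_le Finset.inter_subset_right (by omega)
    have h3 : A₂ = A₃ := h1.symm.trans h2
    exact h23 (by rw [he₂, he₃, h3])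
  -- p ≠ 4 : else the symmetric difference A₂ ∆ A₃ is a pair {b, b'} and we get a quad
  have hp4 : p ≠ 4 := by
    intro h4
    have hcd : (A₂ ∆ A₃).card = 2 := by
      have := card_symmDiff' A₂ A₃; omega
    obtain ⟨b, b', hbb', hD⟩ := Finset.card_eq_two.mp hcd
    have hbB : b ∈ B := by
      have : b ∈ A₂ ∆ A₃ := by rw [hD]; simp
      rw [Finset.mem_symmDiff] at this
      rcases this with ⟨h, _⟩ | ⟨h, _⟩
      · exact hs₂ h
      · exact hs₃ h
    have hb'B : b' ∈ B := by
      have : b' ∈ A₂ ∆ A₃ := by rw [hD]; simp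
      rw [Finset.mem_symmDiff] at this
      rcases this with ⟨h, _⟩ | ⟨h, _⟩
      · exact hs₂ h
      · exact hs₃ h
    have hsum : y₂ + y₃ + b + b' = 0 := by
      have h1 : ∑ v ∈ A₂ ∆ A₃, v = b + b' := by rw [hD, Finset.sum_pair hbb']
      have h2 : y₂ + y₃ = b + b' := by
        rw [he₂, he₃, ← sum_symmDiff_char2, h1]
      calc y₂ + y₃ + b + b' = (y₂ + y₃) + (b + b') := by ring
        _ = (b + b') + (b + b') := by rw [h2]
        _ = 0 := add_self_zero _
    exact hC y₂ hy₂C y₃ hy₃C b (hBC hbB) b' (hBC hb'B)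
      h23 (fun h => hy₂B (h ▸ hbB)) (fun h => hy₂B (h ▸ hb'B))
      (fun h => hy₃B (h ▸ hbB)) (fun h => hy₃B (h ▸ hb'B)) hbb' hsum
  -- triple intersection
  set T := A₁ ∩ A₂ ∩ A₃ with hT
  have hT13 : (A₁ ∩ A₃) ∩ (A₂ ∩ A₃) = T := by
    ext x; simp only [Finset.mem_inter, hT]; tauto
  -- inclusion-exclusion for the triple union
  have hu : (A₁ ∪ A₂ ∪ A₃).card ≤ 8 := by
    rw [← hBcard]
    exact Finset.card_le_card (Finset.union_subset (Finset.union_subset hs₁ hs₂) hs₃)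
  have hie12 := Finset.card_union_add_card_inter A₁ A₂
  have hieU := Finset.card_union_add_card_inter (A₁ ∪ A₂) A₃
  have hdistr : (A₁ ∪ A₂) ∩ A₃ = (A₁ ∩ A₃) ∪ (A₂ ∩ A₃) := by
    ext x; simp only [Finset.mem_inter, Finset.mem_union]; tauto
  have hieI := Finset.card_union_add_card_inter (A₁ ∩ A₃) (A₂ ∩ A₃)
  rw [hdistr] at hieU
  rw [hT13] at hieI
  -- so T.card ≤ p - 3, forcing p = 3, T.card = 0
  have hp3 : p = 3 := by omega
  have hT0 : T.card = 0 := by omega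
  -- the triple symmetric difference S is a singleton
  set S := (A₁ ∆ A₂) ∆ A₃ with hS
  have hDA : ((A₁ ∆ A₂) ∩ A₃) = (A₁ ∩ A₃) ∆ (A₂ ∩ A₃) := by
    ext x
    simp only [Finset.mem_symmDiff, Finset.mem_inter]
    tauto
  have hcardDA : ((A₁ ∆ A₂) ∩ A₃).card = 5 := by
    rw [hDA]
    have := card_symmDiff' (A₁ ∩ A₃) (A₂ ∩ A₃)
    rw [hT13] at this
    omega
  have hcardD : (A₁ ∆ A₂).card = 6 := by
    have := card_symmDiff' A₁ A₂; omega
  have hcardS : S.card = 1 := by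
    have := card_symmDiff' (A₁ ∆ A₂) A₃
    rw [hS]
    omega
  obtain ⟨b, hSb⟩ := Finset.card_eq_one.mp hcardS
  have hbB : b ∈ B := by
    have hbS : b ∈ S := by rw [hSb]; simp
    rw [hS, Finset.mem_symmDiff] at hbS
    rcases hbS with ⟨h, _⟩ | ⟨h, _⟩
    · rw [Finset.mem_symmDiff] at h
      rcases h with ⟨h, _⟩ | ⟨h, _⟩
      · exact hs₁ h
      · exact hs₂ h
    · exact hs₃ h
  have hsum : y₁ + y₂ + y₃ + b = 0 := by
    have h1 : ∑ v ∈ S, v = b := by rw [hSb, Finset.sum_singleton]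
    have h2 : y₁ + y₂ + y₃ = b := by
      rw [he₁, he₂, he₃, ← sum_symmDiff_char2, ← sum_symmDiff_char2, ← hS, h1]
    rw [h2]; exact add_self_zero b
  exact hC y₁ hy₁C y₂ hy₂C y₃ hy₃C b (hBC hbB)
    h12 h13 (fun h => hy₁B (h ▸ hbB)) h23 (fun h => hy₂B (h ▸ hbB))
    (fun h => hy₃B (h ▸ hbB)) hsum


theorem forbidden_triples {n : ℕ} (C : Set (Fin n → ZMod 2))
    (hC : IsCap C) (B B₁ B₂ B₃ : Finset (Fin n → ZMod 2)) (hBC : ↑B ⊆ C)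
    (hB : AffIndep B) (hBcard : B.card = 8)
    (x₁ x₂ x₃ : Fin n → ZMod 2)
    (hx₁C : x₁ ∈ C) (hx₁B : x₁ ∉ B)
    (hx₂C : x₂ ∈ C) (hx₂B : x₂ ∉ B)
    (hx₃C : x₃ ∈ C) (hx₃B : x₃ ∉ B)
    (h12 : x₁ ≠ x₂) (h13 : x₁ ≠ x₃) (h23 : x₂ ≠ x₃)
    (hs₁ : B₁ ⊆ B) (hs₂ : B₂ ⊆ B) (hs₃ : B₃ ⊆ B)
    (he₁ : x₁ = ∑ v ∈ B₁, v) (he₂ : x₂ = ∑ v ∈ B₂, v) (he₃ : x₃ = ∑ v ∈ B₃, v)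
    (hc₁ : B₁.card = 5) (hc₂ : B₂.card = 5) (hc₃ : B₃.card = 5) :
    ¬((B₁ ∩ B₂).card = 2 ∧ (B₁ ∩ B₃).card = 2) ∧
    ¬((B₁ ∩ B₂).card = 2 ∧ (B₂ ∩ B₃).card = 2) ∧
    ¬((B₁ ∩ B₃).card = 2 ∧ (B₂ ∩ B₃).card = 2) := by
  refine ⟨fun ⟨ha, hb⟩ => ?_, fun ⟨ha, hb⟩ => ?_, fun ⟨ha, hb⟩ => ?_⟩
  · exact apex C hC B B₁ B₂ B₃ hBC hBcard x₁ x₂ x₃ hx₁C hx₁B hx₂C hx₂B hx₃C hx₃B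
      h12 h13 h23 hs₁ hs₂ hs₃ he₁ he₂ he₃ hc₁ hc₂ hc₃ ha hb
  · exact apex C hC B B₂ B₁ B₃ hBC hBcard x₂ x₁ x₃ hx₂C hx₂B hx₁C hx₁B hx₃C hx₃B
      h12.symm h23 h13 hs₂ hs₁ hs₃ he₂ he₁ he₃ hc₂ hc₁ hc₃
      (by rwa [Finset.inter_comm]) hb
  · exact apex C hC B B₃ B₁ B₂ hBC hBcard x₃ x₁ x₂ hx₃C hx₃B hx₁C hx₁B hx₂C hx₂B
      h13.symm h23.symm h12 hs₃ hs₁ hs₂ he₃ he₁ he₂ hc₃ hc₁ hc₂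
      (by rwa [Finset.inter_comm]) (by rwa [Finset.inter_comm])
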